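/- Let X be a real-valued random variable having a log-concave probability density function f with respect to Lebesgue measure (i.e., f((1-λ)x + λy) ≥ f(x)^{1-λ} f(y)^{λ} for all x, y ∈ ℝ and λ ∈ [0,1]) and finite expectation. Then P(X ≤ E[X]) ≥ 1/e. -/

import Mathlib

open MeasureTheory

open Set Filter

lemma grunbaum_aux_pt (f : ℝ → ℝ) (hf0 : ∀ x, 0 ≤ f x)
    (hlc : ∀ x y l : ℝ, 0 ≤ l → l ≤ 1 →
      f x ^ (1 - l) * f y ^ l ≤ f ((1 - l) * x + l * y)) :
    ∀ t x y : ℝ, t ≤ x → x ≤ y → f t * f y ≤ f x * f (t + (y - x)) := by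
  intro t x y htx hxy
  rcases eq_or_lt_of_le (htx.trans hxy) with hty | hty
  · have h1 : t = x := le_antisymm htx (hxy.trans hty.ge)
    have h2 : x = y := le_antisymm hxy (hty.ge.trans htx)
    subst h1; subst h2; simp
  · rcases eq_or_lt_of_le (hf0 t) with h0t | h0t
    · rw [← h0t, zero_mul]
      exact mul_nonneg (hf0 _) (hf0 _)
    rcases eq_or_lt_of_le (hf0 y) with h0y | h0y
    · rw [← h0y, mul_zero]
      exact mul_nonneg (hf0 _) (hf0 _)
    have hd : (0:ℝ) < y - t := by linarith
    set l₁ : ℝ := (x - t) / (y - t) with hl₁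
    have hl₁0 : 0 ≤ l₁ := div_nonneg (by linarith) hd.le
    have hl₁1 : l₁ ≤ 1 := (div_le_one hd).2 (by linarith)
    set l₂ : ℝ := (y - x) / (y - t) with hl₂
    have hl₂0 : 0 ≤ l₂ := div_nonneg (by linarith) hd.le
    have hl₂1 : l₂ ≤ 1 := (div_le_one hd).2 (by linarith)
    have hne : y - t ≠ 0 := ne_of_gt hd
    have hsum : l₁ + l₂ = 1 := by rw [hl₁, hl₂]; field_simp; ring
    have e1 : (1 - l₁) * t + l₁ * y = x := by rw [hl₁]; field_simp; ring
    have e2 : (1 - l₂) * t + l₂ * y = t + (y - x) := by rw [hl₂]; field_simp; ring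
    have h1 := hlc t y l₁ hl₁0 hl₁1
    have h2 := hlc t y l₂ hl₂0 hl₂1
    rw [e1] at h1; rw [e2] at h2
    calc f t * f y = (f t ^ (1 - l₁) * f y ^ l₁) * (f t ^ (1 - l₂) * f y ^ l₂) := by
          rw [mul_mul_mul_comm, ← Real.rpow_add h0t, ← Real.rpow_add h0y]
          rw [show (1 - l₁) + (1 - l₂) = 1 by linarith, show l₁ + l₂ = 1 from hsum]
          rw [Real.rpow_one, Real.rpow_one]
      _ ≤ f x * f (t + (y - x)) := by
          apply mul_le_mul h1 h2 (mul_nonneg (Real.rpow_nonneg (hf0 _) _) (Real.rpow_nonneg (hf0 _) _)) (hf0 _)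

lemma grunbaum_aux_ratio (f : ℝ → ℝ) (hf0 : ∀ x, 0 ≤ f x) (hfi : Integrable f)
    (hlc : ∀ x y l : ℝ, 0 ≤ l → l ≤ 1 →
      f x ^ (1 - l) * f y ^ l ≤ f ((1 - l) * x + l * y))
    {x y : ℝ} (hxy : x ≤ y) :
    f y * ∫ t in Iic x, f t ≤ f x * ∫ t in Iic y, f t := by
  have htrans : ∫ t in Iic x, f (t + (y - x)) = ∫ t in Iic y, f t := by
    have h := (measurePreserving_add_right (volume : Measure ℝ) (y - x)).setIntegral_preimage_emb
      (measurableEmbedding_addRight (y - x)) f (Iic y)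
    have : x + (y - x) = y := by ring
    simpa [preimage_add_const_Iic, this] using h
  calc f y * ∫ t in Iic x, f t = ∫ t in Iic x, f t * f y := by
        rw [integral_mul_const]; ring
    _ ≤ ∫ t in Iic x, f x * f (t + (y - x)) := by
        apply setIntegral_mono_on
        · exact (hfi.integrableOn).mul_const _
        · exact ((hfi.comp_add_right (y - x)).integrableOn).const_mul _
        · exact measurableSet_Iic
        · intro t ht
          exact grunbaum_aux_pt f hf0 hlc t x y ht hxy
    _ = f x * ∫ t in Iic y, f t := by rw [MeasureTheory.integral_const_mul, htrans]

lemma grunbaum_step_left (f : ℝ → ℝ) (hfi : Integrable f) (F : ℝ → ℝ)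
    (hF : ∀ t, F t = ∫ s in Iic t, f s) (hFmono : Monotone F) (hF0 : ∀ t, 0 ≤ F t)
    (d m : ℝ) (hd : 0 ≤ d) (hlow : ∀ t, t ≤ m → d * F t ≤ f t)
    {t₁ t₂ : ℝ} (h12 : t₁ ≤ t₂) (h2m : t₂ ≤ m) :
    F t₁ * (1 + d * (t₂ - t₁)) ≤ F t₂ := by
  have hdiff : F t₂ - F t₁ = ∫ s in t₁..t₂, f s := by
    rw [hF, hF]; exact intervalIntegral.integral_Iic_sub_Iic hfi.integrableOn hfi.integrableOn
  have hmono : d * F t₁ * (t₂ - t₁) ≤ ∫ s in t₁..t₂, f s := by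
    have : ∫ _ in t₁..t₂, (d * F t₁) ≤ ∫ s in t₁..t₂, f s := by
      apply intervalIntegral.integral_mono_on h12 (intervalIntegrable_const)
        (hfi.intervalIntegrable)
      intro s hs
      calc d * F t₁ ≤ d * F s := mul_le_mul_of_nonneg_left (hFmono hs.1) hd
        _ ≤ f s := hlow s (hs.2.trans h2m)
    simpa [mul_comm, mul_assoc] using this
  nlinarith [hF0 t₁]

lemma grunbaum_step_right (f : ℝ → ℝ) (hfi : Integrable f) (F : ℝ → ℝ)
    (hF : ∀ t, F t = ∫ s in Iic t, f s) (hFmono : Monotone F) (hF0 : ∀ t, 0 ≤ F t)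
    (d m : ℝ) (hd : 0 ≤ d) (hup : ∀ t, m ≤ t → f t ≤ d * F t)
    {t₁ t₂ : ℝ} (h12 : t₁ ≤ t₂) (h1m : m ≤ t₁) :
    F t₂ * (1 - d * (t₂ - t₁)) ≤ F t₁ := by
  have hdiff : F t₂ - F t₁ = ∫ s in t₁..t₂, f s := by
    rw [hF, hF]; exact intervalIntegral.integral_Iic_sub_Iic hfi.integrableOn hfi.integrableOn
  have hmono : ∫ s in t₁..t₂, f s ≤ d * F t₂ * (t₂ - t₁) := by
    have : ∫ s in t₁..t₂, f s ≤ ∫ _ in t₁..t₂, (d * F t₂) := by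
      apply intervalIntegral.integral_mono_on h12 (hfi.intervalIntegrable)
        (intervalIntegrable_const)
      intro s hs
      calc f s ≤ d * F s := hup s (h1m.trans hs.1)
        _ ≤ d * F t₂ := mul_le_mul_of_nonneg_left (hFmono hs.2) hd
    simpa [mul_comm, mul_assoc] using this
  nlinarith [hF0 t₂]

lemma grunbaum_exp_left (F : ℝ → ℝ) (hF0 : ∀ t, 0 ≤ F t) (d m : ℝ) (hd : 0 ≤ d)
    (hstep : ∀ t₁ t₂ : ℝ, t₁ ≤ t₂ → t₂ ≤ m → F t₁ * (1 + d * (t₂ - t₁)) ≤ F t₂)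
    {t : ℝ} (ht : t ≤ m) : F t * Real.exp (d * (m - t)) ≤ F m := by
  set s : ℝ := m - t with hs
  have hs0 : 0 ≤ s := by simp [hs]; linarith
  have key : ∀ n : ℕ, 1 ≤ n → F t * (1 + (d * s) / n) ^ n ≤ F m := by
    intro n hn
    have hh0 : 0 ≤ s / n := div_nonneg hs0 (Nat.cast_nonneg n)
    have claim : ∀ k : ℕ, (k : ℝ) * (s / n) ≤ s →
        F t * (1 + d * (s / n)) ^ k ≤ F (m - s + k * (s / n)) := by
      intro k
      induction k with
      | zero => intro _; simp [hs]
      | succ k ih =>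
        intro hk1
        have hkk : (k : ℝ) * (s / n) ≤ s := by
          have : (k : ℝ) * (s / n) ≤ (k + 1 : ℝ) * (s / n) := by nlinarith
          calc (k : ℝ) * (s / n) ≤ ((k : ℕ) + 1 : ℝ) * (s / n) := by push_cast; nlinarith
            _ ≤ s := by push_cast at hk1 ⊢; linarith
        have ih' := ih hkk
        have hstep' := hstep (m - s + k * (s / n)) (m - s + (k + 1 : ℕ) * (s / n))
          (by push_cast; nlinarith) (by push_cast at hk1 ⊢; linarith)
        have he : (m - s + ((k:ℕ) + 1 : ℝ) * (s / n)) - (m - s + k * (s / n)) = s / n := by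
          push_cast; ring
        push_cast at hstep'
        rw [he] at hstep'
        calc F t * (1 + d * (s / n)) ^ (k + 1)
            = (F t * (1 + d * (s / n)) ^ k) * (1 + d * (s / n)) := by ring
          _ ≤ F (m - s + k * (s / n)) * (1 + d * (s / n)) := by
              apply mul_le_mul_of_nonneg_right ih'; nlinarith
          _ ≤ F (m - s + ((k:ℝ) + 1) * (s / n)) := hstep'
          _ = F (m - s + ((k+1 : ℕ) : ℝ) * (s / n)) := by norm_cast
    have hn0 : (n : ℝ) ≠ 0 := by positivity
    have := claim n (by field_simp; exact le_rfl)
    have he2 : m - s + (n : ℝ) * (s / n) = m := by field_simp; ring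
    rw [he2] at this
    have he3 : d * (s / n) = (d * s) / n := by ring
    rwa [he3] at this
  have hlim : Tendsto (fun n : ℕ => F t * (1 + (d * s) / n) ^ n) atTop
      (nhds (F t * Real.exp (d * s))) :=
    (Real.tendsto_one_add_div_pow_exp (d * s)).const_mul _
  exact le_of_tendsto hlim (eventually_atTop.2 ⟨1, fun n hn => key n hn⟩)

lemma grunbaum_exp_right (F : ℝ → ℝ) (hF0 : ∀ t, 0 ≤ F t) (d m : ℝ) (hd : 0 ≤ d)
    (hstep : ∀ t₁ t₂ : ℝ, t₁ ≤ t₂ → m ≤ t₁ → F t₂ * (1 - d * (t₂ - t₁)) ≤ F t₁)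
    {t : ℝ} (ht : m ≤ t) : F t * Real.exp (-(d * (t - m))) ≤ F m := by
  set s : ℝ := t - m with hs
  have hs0 : 0 ≤ s := by simp [hs]; linarith
  have key : ∀ n : ℕ, 1 ≤ n → (n:ℝ) ≥ d * s → F t * (1 + (-(d * s)) / n) ^ n ≤ F m := by
    intro n hn hds
    have hn0 : (n : ℝ) ≠ 0 := by positivity
    have hh0 : 0 ≤ s / n := div_nonneg hs0 (Nat.cast_nonneg n)
    have hnpos : (0:ℝ) < n := by positivity
    have hfac : 0 ≤ 1 - d * (s / n) := by
      rw [sub_nonneg, show d * (s / (n:ℝ)) = d * s / n by ring]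
      exact (div_le_one hnpos).mpr hds
    have claim : ∀ k : ℕ, (k : ℝ) * (s / n) ≤ s →
        F t * (1 - d * (s / n)) ^ k ≤ F (m + s - k * (s / n)) := by
      intro k
      induction k with
      | zero => intro _; simp [hs]
      | succ k ih =>
        intro hk1
        have hkk : (k : ℝ) * (s / n) ≤ s := by
          calc (k : ℝ) * (s / n) ≤ ((k : ℕ) + 1 : ℝ) * (s / n) := by push_cast; nlinarith
            _ ≤ s := by push_cast at hk1 ⊢; linarith
        have ih' := ih hkk
        have hstep' := hstep (m + s - ((k:ℕ) + 1 : ℝ) * (s / n)) (m + s - k * (s / n))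
          (by push_cast; nlinarith) (by push_cast at hk1 ⊢; linarith)
        have he : (m + s - (k:ℝ) * (s / n)) - (m + s - ((k:ℕ) + 1 : ℝ) * (s / n)) = s / n := by
          push_cast; ring
        push_cast at hstep'
        rw [he] at hstep'
        calc F t * (1 - d * (s / n)) ^ (k + 1)
            = (F t * (1 - d * (s / n)) ^ k) * (1 - d * (s / n)) := by ring
          _ ≤ F (m + s - k * (s / n)) * (1 - d * (s / n)) := by
              apply mul_le_mul_of_nonneg_right ih' hfac
          _ ≤ F (m + s - ((k:ℝ) + 1) * (s / n)) := hstep'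
          _ = F (m + s - ((k+1 : ℕ) : ℝ) * (s / n)) := by norm_cast
    have := claim n (by field_simp; exact le_rfl)
    have he2 : m + s - (n : ℝ) * (s / n) = m := by field_simp; ring
    rw [he2] at this
    have he3 : 1 - d * (s / n) = 1 + (-(d * s)) / n := by ring
    rwa [he3] at this
  have hlim : Tendsto (fun n : ℕ => F t * (1 + (-(d * s)) / n) ^ n) atTop
      (nhds (F t * Real.exp (-(d * s)))) :=
    (Real.tendsto_one_add_div_pow_exp (-(d * s))).const_mul _
  refine le_of_tendsto hlim ?_
  obtain ⟨N, hN⟩ := exists_nat_ge (d * s)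
  refine eventually_atTop.2 ⟨max 1 N, fun n hn => key n (le_trans (le_max_left _ _) hn)
    (hN.trans (by exact_mod_cast le_trans (le_max_right _ _) hn))⟩

/-- **Grünbaum's inequality.** If `X` is a real-valued random variable with a log-concave
probability density function `f` with respect to Lebesgue measure and with finite
expectation, then `P(X ≤ E[X]) ≥ 1/e`. -/
theorem grunbaum_log_concave_density
    {Ω : Type*} [MeasurableSpace Ω] (μ : Measure Ω) [IsProbabilityMeasure μ]
    (X : Ω → ℝ) (hX : Measurable X) (f : ℝ → ℝ) (hf : Measurable f)
    (hf0 : ∀ x, 0 ≤ f x)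
    (hdens : μ.map X = (volume : Measure ℝ).withDensity (fun x => ENNReal.ofReal (f x)))
    (hlc : ∀ x y l : ℝ, 0 ≤ l → l ≤ 1 →
      f x ^ (1 - l) * f y ^ l ≤ f ((1 - l) * x + l * y))
    (hint : Integrable X μ) :
    Real.exp (-1) ≤ (μ {ω | X ω ≤ ∫ ω, X ω ∂μ}).toReal := by
  set m : ℝ := ∫ ω, X ω ∂μ with hm
  set F : ℝ → ℝ := fun t => ∫ s in Iic t, f s with hFdef
  -- total mass 1
  have hlint : ∫⁻ x, ENNReal.ofReal (f x) = 1 := by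
    have h1 : μ.map X univ = 1 := by
      rw [Measure.map_apply hX MeasurableSet.univ]; simp
    rw [hdens, withDensity_apply _ MeasurableSet.univ, Measure.restrict_univ] at h1
    exact h1
  have hfi : Integrable f := by
    refine ⟨hf.aestronglyMeasurable, ?_⟩
    rw [hasFiniteIntegral_iff_ofReal (ae_of_all _ hf0), hlint]
    exact ENNReal.one_lt_top
  have hfint1 : ∫ x, f x = 1 := by
    rw [integral_eq_lintegral_of_nonneg_ae (ae_of_all _ hf0) hf.aestronglyMeasurable, hlint]
    simp
  -- bridge between μ and F
  have hB : ∀ t, μ {ω | X ω ≤ t} = ENNReal.ofReal (F t) := by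
    intro t
    have h1 : μ {ω | X ω ≤ t} = μ.map X (Iic t) := by
      rw [Measure.map_apply hX measurableSet_Iic]; rfl
    rw [h1, hdens, withDensity_apply _ measurableSet_Iic,
      ← ofReal_integral_eq_lintegral_ofReal hfi.integrableOn
        (ae_of_all _ (fun x => hf0 x))]
  have hBlt : ∀ t, μ {ω | X ω < t} = ENNReal.ofReal (F t) := by
    intro t
    have h1 : μ {ω | X ω < t} = μ.map X (Iio t) := by
      rw [Measure.map_apply hX measurableSet_Iio]; rfl
    rw [h1, hdens, withDensity_apply _ measurableSet_Iio,
      setLIntegral_congr (Iio_ae_eq_Iic (μ := (volume : Measure ℝ)) (a := t)),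
      ← ofReal_integral_eq_lintegral_ofReal hfi.integrableOn
        (ae_of_all _ (fun x => hf0 x))]
  -- F basic properties
  have hF0 : ∀ t, 0 ≤ F t := fun t =>
    setIntegral_nonneg measurableSet_Iic (fun s _ => hf0 s)
  have hFmono : Monotone F := by
    intro a b hab
    exact setIntegral_mono_set hfi.integrableOn (ae_of_all _ hf0)
      (HasSubset.Subset.eventuallyLE (Iic_subset_Iic.mpr hab))
  have hFone : ∀ t, F t ≤ 1 := by
    intro t
    rw [← hfint1]
    exact setIntegral_le_integral hfi (ae_of_all _ hf0)
  set q : ℝ := F m with hqdef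
  have hgoal_eq : (μ {ω | X ω ≤ m}).toReal = q := by
    rw [hB m, ENNReal.toReal_ofReal (hF0 m)]
  -- q > 0
  have hq0 : 0 < q := by
    by_contra hq
    push_neg at hq
    have hq' : q = 0 := le_antisymm hq (hF0 m)
    have hμ0 : μ {ω | X ω ≤ m} = 0 := by rw [hB m, ← hqdef, hq', ENNReal.ofReal_zero]
    have hae : ∀ᵐ ω ∂μ, m < X ω := by
      rw [ae_iff]
      convert hμ0 using 2
      ext ω; simp [not_lt]
    have hsub : Integrable (fun ω => X ω - m) μ := hint.sub (integrable_const m)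
    have hzint : ∫ ω, (X ω - m) ∂μ = 0 := by
      rw [integral_sub hint (integrable_const m), integral_const]
      simp [hm]
    have hzero : (fun ω => X ω - m) =ᵐ[μ] 0 :=
      (integral_eq_zero_iff_of_nonneg_ae (hae.mono fun ω h => by simp only [Pi.zero_apply]; linarith) hsub).mp hzint
    obtain ⟨ω, h1, h2⟩ := (hae.and hzero).exists
    simp only [Pi.zero_apply] at h2
    linarith
  rcases le_or_gt 1 q with hq1 | hq1
  · rw [hgoal_eq]
    exact le_trans (Real.exp_lt_one_iff.mpr (by norm_num)).le hq1
  -- f m > 0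
  have hfm : 0 < f m := by
    rcases (hf0 m).lt_or_eq with h | h
    · exact h
    exfalso
    by_cases hex : ∃ u, u < m ∧ 0 < f u
    · -- then f vanishes on Ioi m, so F m = 1, contradiction with q < 1
      obtain ⟨u, hum, hu⟩ := hex
      have hvan : ∀ v, m < v → f v = 0 := by
        intro v hmv
        by_contra hv
        have hv' : 0 < f v := (hf0 v).lt_of_ne (Ne.symm hv)
        have hl0 : 0 < (m - u) / (v - u) := by
          apply div_pos <;> linarith
        have hl1 : (m - u) / (v - u) ≤ 1 := by
          rw [div_le_one (by linarith)]; linarith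
        have := hlc u v ((m - u) / (v - u)) hl0.le hl1
        have hvu : v - u ≠ 0 := by intro h'; rw [sub_eq_zero] at h'; linarith
        have he : (1 - (m - u) / (v - u)) * u + (m - u) / (v - u) * v = m := by
          field_simp
          ring
        rw [he] at this
        have hpos : 0 < f u ^ (1 - (m - u) / (v - u)) * f v ^ ((m - u) / (v - u)) :=
          mul_pos (Real.rpow_pos_of_pos hu _) (Real.rpow_pos_of_pos hv' _)
        rw [← h] at this
        linarith
      have hIoi : ∫ s in Ioi m, f s = 0 := by
        rw [setIntegral_congr_fun measurableSet_Ioi (fun v hv => hvan v hv)]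
        simp
      have : F m = 1 := by
        have := intervalIntegral.integral_Iic_add_Ioi (b := m) hfi.integrableOn hfi.integrableOn
        rw [hfint1] at this
        rw [hqdef] at *
        simp only [hFdef]
        linarith [hIoi, this]
      rw [hqdef] at hq1; linarith
    · -- f vanishes on Iic m, so F m = 0, contradiction with q > 0
      push_neg at hex
      have hvan : ∀ s ∈ Iic m, f s = 0 := by
        intro s hs
        rcases (mem_Iic.mp hs).lt_or_eq with h' | h'
        · have := hex s h'
          linarith [hf0 s]
        · rw [h', ← h]
      have : F m = 0 := by
        simp only [hFdef]
        rw [setIntegral_congr_fun measurableSet_Iic hvan]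
        simp
      rw [hqdef] at hq0; linarith
  set d : ℝ := f m / q with hddef
  have hd : 0 < d := div_pos hfm hq0
  -- pointwise density bounds
  have hlow : ∀ t, t ≤ m → d * F t ≤ f t := by
    intro t ht
    have := grunbaum_aux_ratio f hf0 hfi hlc ht
    rw [hddef, div_mul_eq_mul_div, div_le_iff₀ hq0]
    calc f m * F t ≤ f t * F m := this
      _ = f t * q := rfl
  have hup : ∀ t, m ≤ t → f t ≤ d * F t := by
    intro t ht
    have := grunbaum_aux_ratio f hf0 hfi hlc ht
    rw [hddef, div_mul_eq_mul_div, le_div_iff₀ hq0]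
    calc f t * q = f t * F m := rfl
      _ ≤ f m * F t := this
  -- exponential bound on F
  have hexp : ∀ t, F t ≤ q * Real.exp (d * (t - m)) := by
    intro t
    rcases le_total t m with ht | ht
    · have h := grunbaum_exp_left F hF0 d m hd.le
        (fun t₁ t₂ h12 h2m => grunbaum_step_left f hfi F (fun _ => rfl) hFmono hF0 d m hd.le
          hlow h12 h2m) ht
      have hEpos : (0:ℝ) < Real.exp (d * (m - t)) := Real.exp_pos _
      rw [show d * (t - m) = -(d * (m - t)) by ring, Real.exp_neg]
      rw [← le_div_iff₀ hEpos] at h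
      rw [div_eq_mul_inv] at h; exact h
    · have h := grunbaum_exp_right F hF0 d m hd.le
        (fun t₁ t₂ h12 h1m => grunbaum_step_right f hfi F (fun _ => rfl) hFmono hF0 d m hd.le
          hup h12 h1m) ht
      have hEpos : (0:ℝ) < Real.exp (-(d * (t - m))) := Real.exp_pos _
      rw [← le_div_iff₀ hEpos] at h
      rwa [div_eq_mul_inv, ← Real.exp_neg, neg_neg] at h

  -- layer cake setup
  set T : ℝ := -Real.log q / d with hTdef
  have hT0 : 0 < T := div_pos (neg_pos.2 (Real.log_neg hq0 hq1)) hd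
  have hqT : q * Real.exp (d * T) = 1 := by
    have hdT : d * T = -Real.log q := by
      rw [hTdef, mul_comm, div_mul_cancel₀ _ (ne_of_gt hd)]
    rw [hdT, Real.exp_neg, Real.exp_log hq0, mul_inv_cancel₀ (ne_of_gt hq0)]
  have hXm : Integrable (fun ω => X ω - m) μ := hint.sub (integrable_const m)
  have hmXi : Integrable (fun ω => max (m - X ω) 0) μ := ((integrable_const m).sub hint).pos_part
  have hXmi : Integrable (fun ω => max (X ω - m) 0) μ := hXm.pos_part
  have hmean0 : ∫ ω, (X ω - m) ∂μ = 0 := by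
    rw [integral_sub hint (integrable_const m), integral_const]
    simp [hm]
  have hBochner : ∫ ω, max (m - X ω) 0 ∂μ = ∫ ω, max (X ω - m) 0 ∂μ := by
    have hpt : ∀ ω, max (X ω - m) 0 - max (m - X ω) 0 = X ω - m := by
      intro ω
      rcases le_total (X ω) m with h | h
      · rw [max_eq_right (by linarith : X ω - m ≤ 0), max_eq_left (by linarith : (0:ℝ) ≤ m - X ω)]
        ring
      · rw [max_eq_left (by linarith : (0:ℝ) ≤ X ω - m), max_eq_right (by linarith : m - X ω ≤ 0)]
        ring
    have h2 : ∫ ω, (max (X ω - m) 0 - max (m - X ω) 0) ∂μ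
        = (∫ ω, max (X ω - m) 0 ∂μ) - ∫ ω, max (m - X ω) 0 ∂μ := integral_sub hXmi hmXi
    have h3 : ∫ ω, (max (X ω - m) 0 - max (m - X ω) 0) ∂μ = 0 := by
      rw [integral_congr_ae (ae_of_all _ hpt)]
      exact hmean0
    linarith [h2, h3]
  -- identify both lintegrals via layer cake
  have hlayA : ∫⁻ t in Ioi (0:ℝ), μ {a | t < max (m - X a) 0}
      = ENNReal.ofReal (∫ ω, max (m - X ω) 0 ∂μ) := by
    rw [← lintegral_eq_lintegral_meas_lt μ (f := fun ω => max (m - X ω) 0)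
      (ae_of_all _ fun ω => le_max_right _ _)
      ((measurable_const.sub hX).max measurable_const).aemeasurable]
    exact (ofReal_integral_eq_lintegral_ofReal hmXi (ae_of_all _ fun ω => le_max_right _ _)).symm
  have hlayB : ∫⁻ t in Ioi (0:ℝ), μ {a | t < max (X a - m) 0}
      = ENNReal.ofReal (∫ ω, max (X ω - m) 0 ∂μ) := by
    rw [← lintegral_eq_lintegral_meas_lt μ (f := fun ω => max (X ω - m) 0)
      (ae_of_all _ fun ω => le_max_right _ _)
      ((hX.sub measurable_const).max measurable_const).aemeasurable]
    exact (ofReal_integral_eq_lintegral_ofReal hXmi (ae_of_all _ fun ω => le_max_right _ _)).symm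
  have hABeq : ∫⁻ t in Ioi (0:ℝ), μ {a | t < max (X a - m) 0}
      = ∫⁻ t in Ioi (0:ℝ), μ {a | t < max (m - X a) 0} := by
    rw [hlayA, hlayB, hBochner]
  -- upper bound for the A-side
  have hIexp : ∫ t in Ioi (0:ℝ), Real.exp (-d * t) = 1 / d := by
    have h := integral_Ioi_of_hasDerivAt_of_tendsto
      (f := fun t : ℝ => -(1/d) * Real.exp (-d * t)) (f' := fun t : ℝ => Real.exp (-d * t))
      (a := 0) (m := 0)
      (Continuous.continuousWithinAt (by fun_prop))
      (fun x _ => by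
        have h1 : HasDerivAt (fun t : ℝ => -d * t) (-d) x := by
          simpa using (hasDerivAt_id x).const_mul (-d)
        have h2 := (h1.exp).const_mul (-(1/d))
        exact h2.congr_deriv (by field_simp))
      (exp_neg_integrableOn_Ioi 0 hd)
      (by
        have h1 : Tendsto (fun t : ℝ => -d * t) atTop atBot := by
          apply Tendsto.const_mul_atTop_of_neg (by linarith : -d < 0) tendsto_id
        have h2 := Real.tendsto_exp_atBot.comp h1
        have h3 := h2.const_mul (-(1/d))
        simpa using h3)
    simp only [mul_zero, Real.exp_zero, mul_one] at h
    rw [h]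
    field_simp
    ring
  have hAle : ∫⁻ t in Ioi (0:ℝ), μ {a | t < max (m - X a) 0} ≤ ENNReal.ofReal (q / d) := by
    have hmeas : Measurable fun t : ℝ => ENNReal.ofReal (q * Real.exp (-d * t)) := by
      fun_prop
    have hcmp : ∀ t ∈ Ioi (0:ℝ),
        μ {a | t < max (m - X a) 0} ≤ ENNReal.ofReal (q * Real.exp (-d * t)) := by
      intro t ht
      have hset : {a | t < max (m - X a) 0} = {ω | X ω < m - t} := by
        ext a
        simp only [mem_setOf_eq, lt_max_iff]
        constructor
        · rintro (h | h)
          · linarith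
          · exact absurd h (not_lt.2 (le_of_lt ht))
        · intro h; left; linarith
      rw [hset, hBlt]
      apply ENNReal.ofReal_le_ofReal
      calc F (m - t) ≤ q * Real.exp (d * ((m - t) - m)) := hexp _
        _ = q * Real.exp (-d * t) := by ring_nf
    calc ∫⁻ t in Ioi (0:ℝ), μ {a | t < max (m - X a) 0}
        ≤ ∫⁻ t in Ioi (0:ℝ), ENNReal.ofReal (q * Real.exp (-d * t)) :=
          setLIntegral_mono hmeas hcmp
      _ = ENNReal.ofReal (∫ t in Ioi (0:ℝ), q * Real.exp (-d * t)) := by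
          rw [ofReal_integral_eq_lintegral_ofReal
            (((exp_neg_integrableOn_Ioi 0 hd)).const_mul q)
            ((ae_restrict_iff' measurableSet_Ioi).2 (ae_of_all _ fun t _ =>
              mul_nonneg hq0.le (Real.exp_pos _).le))]
      _ = ENNReal.ofReal (q / d) := by
          rw [MeasureTheory.integral_const_mul, hIexp]
          ring_nf
  -- lower bound for the B-side
  have hIval : ∫ t in Ioc (0:ℝ) T, (1 - q * Real.exp (d * t)) = T - (1 - q) / d := by
    rw [← intervalIntegral.integral_of_le hT0.le]
    have h1 : IntervalIntegrable (fun t : ℝ => q * Real.exp (d * t)) volume 0 T := by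
      apply Continuous.intervalIntegrable; fun_prop
    have h2 : ∫ t in (0:ℝ)..T, q * Real.exp (d * t)
        = q * (d⁻¹ * (Real.exp (d * T) - 1)) := by
      rw [intervalIntegral.integral_const_mul]
      congr 1
      rw [intervalIntegral.integral_comp_mul_left (fun x => Real.exp x) (ne_of_gt hd)]
      simp [integral_exp]
    rw [intervalIntegral.integral_sub intervalIntegrable_const h1, h2]
    have hqe : Real.exp (d * T) = 1 / q := by
      rw [eq_div_iff (ne_of_gt hq0), mul_comm]
      exact hqT
    rw [hqe]
    simp only [intervalIntegral.integral_const, smul_eq_mul, sub_zero, mul_one]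
    field_simp
  have hintg : IntegrableOn (fun t : ℝ => 1 - q * Real.exp (d * t)) (Ioc (0:ℝ) T) := by
    apply Continuous.integrableOn_Ioc; fun_prop
  have hBge : ENNReal.ofReal (T - (1 - q) / d)
      ≤ ∫⁻ t in Ioi (0:ℝ), μ {a | t < max (X a - m) 0} := by
    have hmeasB : Measurable fun t : ℝ => μ {a | t < max (X a - m) 0} := by
      apply Antitone.measurable
      intro s t hst
      exact measure_mono fun a ha => lt_of_le_of_lt hst ha
    have hcmp : ∀ t ∈ Ioc (0:ℝ) T,
        ENNReal.ofReal (1 - q * Real.exp (d * t)) ≤ μ {a | t < max (X a - m) 0} := by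
      intro t ht
      have hset : {a | t < max (X a - m) 0} = {ω | X ω ≤ m + t}ᶜ := by
        ext a
        simp only [mem_setOf_eq, lt_max_iff, mem_compl_iff, not_le]
        constructor
        · rintro (h | h)
          · linarith
          · exact absurd h (not_lt.2 ht.1.le)
        · intro h; left; linarith
      have hle1 : q * Real.exp (d * t) ≤ 1 := by
        calc q * Real.exp (d * t) ≤ q * Real.exp (d * T) := by
              apply mul_le_mul_of_nonneg_left _ hq0.le
              exact Real.exp_le_exp.2 (mul_le_mul_of_nonneg_left ht.2 hd.le)
          _ = 1 := hqT
      rw [hset, prob_compl_eq_one_sub (show MeasurableSet {ω | X ω ≤ m + t} from hX measurableSet_Iic), hB]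
      rw [ENNReal.ofReal_sub _ (mul_nonneg hq0.le (Real.exp_pos _).le), ← ENNReal.ofReal_one]
      apply tsub_le_tsub_left
      exact ENNReal.ofReal_le_ofReal (by
        calc F (m + t) ≤ q * Real.exp (d * ((m + t) - m)) := hexp _
          _ = q * Real.exp (d * t) := by ring_nf)
    calc ENNReal.ofReal (T - (1 - q) / d)
        = ∫⁻ t in Ioc (0:ℝ) T, ENNReal.ofReal (1 - q * Real.exp (d * t)) := by
          rw [← hIval, ofReal_integral_eq_lintegral_ofReal hintg
            ((ae_restrict_iff' measurableSet_Ioc).2 (ae_of_all _ fun t ht => by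
              have hle1 : q * Real.exp (d * t) ≤ 1 := by
                calc q * Real.exp (d * t) ≤ q * Real.exp (d * T) := by
                      apply mul_le_mul_of_nonneg_left _ hq0.le
                      exact Real.exp_le_exp.2 (mul_le_mul_of_nonneg_left ht.2 hd.le)
                  _ = 1 := hqT
              simp only [Pi.zero_apply]
              linarith))]
      _ ≤ ∫⁻ t in Ioc (0:ℝ) T, μ {a | t < max (X a - m) 0} := by
          apply setLIntegral_mono hmeasB hcmp
      _ ≤ ∫⁻ t in Ioi (0:ℝ), μ {a | t < max (X a - m) 0} :=
          lintegral_mono_set Ioc_subset_Ioi_self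
  -- combine
  have hfinal : T - (1 - q) / d ≤ q / d := by
    rw [← ENNReal.ofReal_le_ofReal_iff (div_nonneg hq0.le hd.le)]
    calc ENNReal.ofReal (T - (1 - q) / d)
        ≤ ∫⁻ t in Ioi (0:ℝ), μ {a | t < max (X a - m) 0} := hBge
      _ = ∫⁻ t in Ioi (0:ℝ), μ {a | t < max (m - X a) 0} := hABeq
      _ ≤ ENNReal.ofReal (q / d) := hAle
  have hlogq : -Real.log q ≤ 1 := by
    have hTle : T ≤ 1 / d := by
      have : (1 - q) / d + q / d = 1 / d := by field_simp; ring
      linarith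
    rw [hTdef] at hTle
    rw [div_le_div_iff₀ hd hd] at hTle
    nlinarith [hd]
  have hq_ge : Real.exp (-1) ≤ q := by
    calc Real.exp (-1) ≤ Real.exp (Real.log q) := Real.exp_le_exp.2 (by linarith)
      _ = q := Real.exp_log hq0
  rw [hgoal_eq]
  exact hq_ge
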